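/- Let f : ℂ → ℂ be a non-constant polynomial function. Then for every r > 0 and every ε > 0 there exists R > 0 such that for every (x,y) ∈ ℂ² with max{|x|,|y|} ≥ R, the Gaussian measure of the set {t ∈ ℂ : |x + t·f(y)| < r} is less than ε. (That is, the family of maps π_t(x,y) = x + t·f(y), parametrized by t in ℂ with the Gaussian measure, is a spreading family.) -/

import Mathlib

open MeasureTheory Polynomial

/-- The standard Gaussian probability measure on ℂ ≅ ℝ²:
    γ(U) = (1/(2π)) ∫_U e^{−|w|²/2} dλ(w). -/
noncomputable def gaussianMeasureC : Measure ℂ :=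
  MeasureTheory.volume.withDensity
    (fun w => ENNReal.ofReal ((2 * Real.pi)⁻¹ * Real.exp (-(‖w‖) ^ 2 / 2)))

lemma gaussianMeasureC_le (s : Set ℂ) (hs : MeasurableSet s) :
    gaussianMeasureC s ≤ ENNReal.ofReal (2 * Real.pi)⁻¹ * volume s := by
  rw [gaussianMeasureC, withDensity_apply _ hs]
  calc ∫⁻ w in s, ENNReal.ofReal ((2 * Real.pi)⁻¹ * Real.exp (-(‖w‖) ^ 2 / 2))
      ≤ ∫⁻ _ in s, ENNReal.ofReal (2 * Real.pi)⁻¹ := by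
        refine lintegral_mono fun w => ENNReal.ofReal_le_ofReal ?_
        have h1 : Real.exp (-(‖w‖) ^ 2 / 2) ≤ 1 := by
          rw [Real.exp_le_one_iff]
          have := sq_nonneg (‖w‖)
          linarith
        have h2 : (0:ℝ) ≤ (2 * Real.pi)⁻¹ := by positivity
        calc (2 * Real.pi)⁻¹ * Real.exp (-(‖w‖) ^ 2 / 2)
            ≤ (2 * Real.pi)⁻¹ * 1 := by nlinarith [Real.exp_pos (-(‖w‖) ^ 2 / 2)]
          _ = (2 * Real.pi)⁻¹ := mul_one _
    _ = ENNReal.ofReal (2 * Real.pi)⁻¹ * volume s := setLIntegral_const s _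

instance : IsFiniteMeasure gaussianMeasureC := by
  constructor
  rw [gaussianMeasureC, withDensity_apply _ MeasurableSet.univ, Measure.restrict_univ]
  have hi := (GaussianFourier.integrable_cexp_neg_mul_sq_norm_add (V := ℂ) (b := 1/2)
    (by norm_num) 0 0)
  have h2 : ∫⁻ v : ℂ, ‖Complex.exp (-(1/2 : ℂ) * (‖v‖:ℂ)^2
      + 0 * ((inner ℝ (0:ℂ) v : ℝ) : ℂ))‖₊ < ⊤ := hi.hasFiniteIntegral
  refine lt_of_le_of_lt (lintegral_mono fun v => ?_) h2
  have hnorm : ‖Complex.exp (-(1/2 : ℂ) * (‖v‖:ℂ)^2 + 0 * ((inner ℝ (0:ℂ) v : ℝ) : ℂ))‖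
      = Real.exp (-(‖v‖) ^ 2 / 2) := by
    rw [Complex.norm_exp]
    congr 1
    simp [Complex.add_re, Complex.mul_re, ← Complex.ofReal_pow]
    ring
  calc ENNReal.ofReal ((2 * Real.pi)⁻¹ * Real.exp (-(‖v‖) ^ 2 / 2))
      ≤ ENNReal.ofReal (Real.exp (-(‖v‖) ^ 2 / 2)) := by
        refine ENNReal.ofReal_le_ofReal ?_
        have h2 : (2 * Real.pi)⁻¹ ≤ 1 := by
          rw [inv_le_one_iff₀]; right; nlinarith [Real.pi_gt_three]
        nlinarith [Real.exp_pos (-(‖v‖) ^ 2 / 2)]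
    _ = ‖Complex.exp (-(1/2 : ℂ) * (‖v‖:ℂ)^2 + 0 * ((inner ℝ (0:ℂ) v : ℝ) : ℂ))‖₊ := by
        rw [← hnorm]; exact ofReal_norm_eq_enorm _

theorem stmt11 (f : ℂ → ℂ) (p : Polynomial ℂ) (hp : 0 < p.natDegree)
    (hf : ∀ z : ℂ, f z = p.eval z) :
    ∀ r : ℝ, 0 < r → ∀ ε : ℝ, 0 < ε → ∃ R : ℝ, 0 < R ∧
      ∀ x y : ℂ, R ≤ max ‖x‖ ‖y‖ →
        gaussianMeasureC {t : ℂ | ‖x + t * f y‖ < r} < ENNReal.ofReal ε := by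
  intro r hr ε hε
  -- choose a small radius ρ
  set ρ : ℝ := min 1 (Real.sqrt ε) with hρdef
  have hρpos : 0 < ρ := lt_min one_pos (Real.sqrt_pos.2 hε)
  have hρsq : ρ ^ 2 ≤ ε := by
    have h1 : ρ ≤ Real.sqrt ε := min_le_right _ _
    have h2 : 0 ≤ Real.sqrt ε := Real.sqrt_nonneg _
    nlinarith [Real.sq_sqrt hε.le]
  have hball : ∀ c : ℂ, gaussianMeasureC (Metric.ball c ρ) < ENNReal.ofReal ε := by
    intro c
    refine lt_of_le_of_lt (gaussianMeasureC_le _ Metric.isOpen_ball.measurableSet) ?_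
    rw [Complex.volume_ball]
    have hpi : ((NNReal.pi : ENNReal)) = ENNReal.ofReal Real.pi := by
      rw [← NNReal.coe_real_pi, ENNReal.ofReal_coe_nnreal]
    rw [hpi, ← ENNReal.ofReal_pow hρpos.le, ← ENNReal.ofReal_mul (by positivity),
      ← ENNReal.ofReal_mul (by positivity)]
    refine ENNReal.ofReal_lt_ofReal_iff hε |>.2 ?_
    have key : (2 * Real.pi)⁻¹ * (ρ ^ 2 * Real.pi) = ρ ^ 2 / 2 := by
      field_simp
    rw [key]
    nlinarith
  -- choose the tail cutoff T
  obtain ⟨T, hT⟩ : ∃ n : ℕ, gaussianMeasureC (Metric.closedBall (0:ℂ) n)ᶜ < ENNReal.ofReal ε := by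
    have h0 : Filter.Tendsto (gaussianMeasureC ∘ fun n : ℕ => (Metric.closedBall (0:ℂ) n)ᶜ)
        Filter.atTop (nhds (gaussianMeasureC (⋂ n : ℕ, (Metric.closedBall (0:ℂ) n)ᶜ))) :=
      tendsto_measure_iInter_atTop
        (fun n => (measurableSet_closedBall).compl.nullMeasurableSet)
        (fun m n h => Set.compl_subset_compl.2
          (Metric.closedBall_subset_closedBall (by exact_mod_cast h)))
        ⟨0, measure_ne_top _ _⟩
    have hempty : (⋂ n : ℕ, (Metric.closedBall (0:ℂ) n)ᶜ) = ∅ := by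
      ext z
      simp only [Set.mem_iInter, Set.mem_compl_iff, Metric.mem_closedBall, not_le,
        Set.mem_empty_iff_false, iff_false, not_forall, not_lt]
      obtain ⟨n, hn⟩ := exists_nat_ge (dist z 0)
      exact ⟨n, hn⟩
    rw [hempty, measure_empty] at h0
    have := h0.eventually_lt_const (ENNReal.ofReal_pos.2 hε)
    exact this.exists
  -- choose A from polynomial growth
  have hdeg : 0 < p.degree := natDegree_pos_iff_degree_pos.1 hp
  have hz : Filter.Tendsto (fun y : ℂ => ‖y‖)
      (Filter.comap (fun y : ℂ => ‖y‖) Filter.atTop) Filter.atTop := Filter.tendsto_comap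
  have hpoly := (p.tendsto_norm_atTop hdeg hz).eventually_ge_atTop (r / ρ + 1)
  rw [Filter.eventually_comap] at hpoly
  rw [Filter.eventually_atTop] at hpoly
  obtain ⟨A, hA⟩ := hpoly
  set A' : ℝ := max A 0 with hA'def
  -- bound M for |f| on the closed ball of radius A'
  obtain ⟨y₀, hy₀, hy₀max⟩ := (isCompact_closedBall (0:ℂ) A').exists_isMaxOn
    (f := fun z : ℂ => ‖p.eval z‖)
    ⟨0, Metric.mem_closedBall_self (le_max_right _ _)⟩
    (p.continuous.norm).continuousOn
  rw [isMaxOn_iff] at hy₀max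
  set M : ℝ := max ‖p.eval y₀‖ 1 with hMdef
  have hM1 : (1:ℝ) ≤ M := le_max_right _ _
  have hM0 : (0:ℝ) < M := lt_of_lt_of_le one_pos hM1
  refine ⟨max A' ((T : ℝ) * M + r), ?_, ?_⟩
  · have : (0:ℝ) < (T : ℝ) * M + r := by positivity
    exact lt_of_lt_of_le this (le_max_right _ _)
  intro x y hxy
  by_cases hy : A ≤ ‖y‖
  · -- |y| large : |f y| is large, the set is contained in a small ball
    have hK : r / ρ + 1 ≤ ‖p.eval y‖ := by
      refine hA ‖y‖ ?_ y rfl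
      exact hy
    have hrρ : 0 < r / ρ := div_pos hr hρpos
    have hfy : 0 < ‖f y‖ := by
      rw [hf y]
      linarith
    have hfy0 : f y ≠ 0 := by
      intro h; rw [h] at hfy; simp at hfy
    have hsub : {t : ℂ | ‖x + t * f y‖ < r} ⊆ Metric.ball (-x / f y) ρ := by
      intro t ht
      simp only [Set.mem_setOf_eq] at ht
      rw [Metric.mem_ball, Complex.dist_eq]
      have heq : t - -x / f y = (x + t * f y) / f y := by
        field_simp
        ring
      rw [heq, norm_div]
      have hfys : r / ρ < ‖f y‖ := by
        rw [hf y]; linarith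
      rw [div_lt_iff₀ hfy]
      nlinarith [mul_lt_mul_of_pos_left hfys hρpos, mul_div_cancel₀ r (ne_of_gt hρpos)]
    calc gaussianMeasureC {t : ℂ | ‖x + t * f y‖ < r}
        ≤ gaussianMeasureC (Metric.ball (-x / f y) ρ) := measure_mono hsub
      _ < ENNReal.ofReal ε := hball _
  · -- |y| small : |x| is large, the set is far from the origin
    push_neg at hy
    have hyA' : ‖y‖ ≤ A' := le_trans hy.le (le_max_left _ _)
    have hxR : (T : ℝ) * M + r ≤ ‖x‖ := by
      rcases max_cases (‖x‖) (‖y‖) with ⟨h1, h2⟩ | ⟨h1, h2⟩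
      · rw [h1] at hxy
        exact le_trans (le_max_right _ _) hxy
      · rw [h1] at hxy
        have : A' ≤ ‖y‖ := le_trans (le_max_left _ _) hxy
        have : A ≤ ‖y‖ := le_trans (le_max_left _ _) this
        linarith
    have hfyM : ‖f y‖ ≤ M := by
      rw [hf y]
      refine le_trans (hy₀max y ?_) (le_max_left _ _)
      rw [Metric.mem_closedBall, Complex.dist_eq, sub_zero]
      exact hyA'
    have hsub : {t : ℂ | ‖x + t * f y‖ < r} ⊆ (Metric.closedBall (0:ℂ) T)ᶜ := by
      intro t ht
      simp only [Set.mem_setOf_eq] at ht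
      simp only [Set.mem_compl_iff, Metric.mem_closedBall, Complex.dist_eq, sub_zero, not_le]
      have h1 : ‖x‖ - r < ‖t * f y‖ := by
        have h := norm_sub_norm_le x (x + t * f y)
        have he : x - (x + t * f y) = -(t * f y) := by ring
        rw [he, norm_neg] at h
        linarith
      have h2 : ‖t * f y‖ ≤ ‖t‖ * M := by
        rw [norm_mul]
        have := norm_nonneg t
        nlinarith
      have h3 : (T : ℝ) * M < ‖t‖ * M := by linarith
      exact lt_of_mul_lt_mul_right h3 hM0.le
    calc gaussianMeasureC {t : ℂ | ‖x + t * f y‖ < r}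
        ≤ gaussianMeasureC (Metric.closedBall (0:ℂ) T)ᶜ := measure_mono hsub
      _ < ENNReal.ofReal ε := hT
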